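/- Let N, n, m, q be natural numbers with n = m + q, q ≥ 1 and N > 2n − m. Let y ∈ ℝ^N, let b ∈ ℝ^{q+1} and c ∈ ℝ^{m+1} be nonzero real vectors, and set a = c ⋆ b ∈ ℝ^{n+1}. If z ∈ ℂ^{N−2n+m+1} is a nonzero vector satisfying [ T_{N−n}(a) y | T_{N−n}(a) T_{N−n}(a)ᵀ T_{N−2n+m}(b)ᵀ ] z = 0 (where the real matrices act on ℂ by entrywise complexification), then the first component of z is nonzero; that is, the eigenvector of the multiparameter eigenvalue problem can always be normalized so that its first entry equals 1. -/
import Mathlib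

open Matrix
open scoped ComplexOrder

/-- Banded Toeplitz matrix `T_k(a)` of a coefficient vector `a = (a_n, …, a_1, a_0)`:
entry `(i,j)` equals the coefficient `a_{n-(j-i)}` (vector component `j - i`, since
component `t` of the vector is the coefficient `a_{n-t}`) when `0 ≤ j - i ≤ n`, else `0`.
The number of columns is passed explicitly (intended: `N = k + n`). -/
def toep {R : Type*} [Semiring R] (k N n : ℕ) (a : Fin (n + 1) → R) :
    Matrix (Fin k) (Fin N) R :=
  Matrix.of fun i j =>
    if h : i.val ≤ j.val ∧ j.val - i.val ≤ n then a ⟨j.val - i.val, by omega⟩ else 0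

/-- Hankel matrix `H_q(y) ∈ R^{(N-q) × (q+1)}` with entries `(H_q(y))_{i,j} = y_{i+j}` (0-based). -/
def hank {R : Type*} [Semiring R] (N q : ℕ) (y : Fin N → R) :
    Matrix (Fin (N - q)) (Fin (q + 1)) R :=
  Matrix.of fun i j => y ⟨i.val + j.val, by have hi := i.isLt; have hj := j.isLt; omega⟩

/-- Convolution of coefficient vectors: `(c ⋆ b)_k = Σ_{i+j=k} c_i b_j`. -/
def convVec {R : Type*} [Semiring R] (m q : ℕ) (c : Fin (m + 1) → R) (b : Fin (q + 1) → R) :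
    Fin (m + q + 1) → R :=
  fun k => ∑ i : Fin (m + 1), ∑ j : Fin (q + 1), if i.val + j.val = k.val then c i * b j else 0

/-- A nonzero vector on `Fin (n+1)` has a minimal nonzero index. -/
lemma exists_min_nonzero {R : Type*} [Zero R] {n : ℕ} (v : Fin (n + 1) → R) (hv : v ≠ 0) :
    ∃ s : Fin (n + 1), v s ≠ 0 ∧ ∀ t : Fin (n + 1), t < s → v t = 0 := by
  classical
  have h : ∃ i, v i ≠ 0 := Function.ne_iff.mp hv
  set S : Finset (Fin (n + 1)) := Finset.univ.filter (fun i => v i ≠ 0) with hS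
  have hSne : S.Nonempty := by
    obtain ⟨i, hi⟩ := h
    exact ⟨i, by simp [hS, hi]⟩
  refine ⟨S.min' hSne, ?_, ?_⟩
  · have := S.min'_mem hSne
    simpa [hS] using this
  · intro t ht
    by_contra htne
    have : S.min' hSne ≤ t := S.min'_le t (by simp [hS, htne])
    exact absurd ht (not_lt.mpr this)

/-- Convolution of nonzero real vectors is nonzero. -/
lemma convVec_ne_zero {m q : ℕ} {c : Fin (m + 1) → ℝ} {b : Fin (q + 1) → ℝ}
    (hc : c ≠ 0) (hb : b ≠ 0) : convVec m q c b ≠ 0 := by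
  classical
  obtain ⟨i₀, hi₀, hi₀min⟩ := exists_min_nonzero c hc
  obtain ⟨j₀, hj₀, hj₀min⟩ := exists_min_nonzero b hb
  intro h
  have hk : i₀.val + j₀.val < m + q + 1 := by
    have := i₀.isLt; have := j₀.isLt; omega
  have heval : convVec m q c b ⟨i₀.val + j₀.val, hk⟩ = c i₀ * b j₀ := by
    unfold convVec
    rw [Finset.sum_eq_single i₀]
    · rw [Finset.sum_eq_single j₀]
      · simp
      · intro j _ hj
        rw [if_neg]
        intro hij
        have hij' : i₀.val + j.val = i₀.val + j₀.val := hij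
        exact hj (Fin.ext (by omega))
      · intro hmem; exact absurd (Finset.mem_univ j₀) hmem
    · intro i _ hi
      refine Finset.sum_eq_zero fun j _ => ?_
      split_ifs with hij
      · have hij' : i.val + j.val = i₀.val + j₀.val := hij
        rcases lt_or_gt_of_ne (fun hv : i.val = i₀.val => hi (Fin.ext hv)) with hlt | hgt
        · rw [hi₀min i (by exact hlt), zero_mul]
        · rw [hj₀min j (by show j.val < j₀.val; omega), mul_zero]
      · rfl
    · intro hmem; exact absurd (Finset.mem_univ i₀) hmem
  have := congrFun h ⟨i₀.val + j₀.val, hk⟩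
  rw [heval] at this
  exact (mul_ne_zero hi₀ hj₀) this

/-- The transpose of a banded Toeplitz matrix of a nonzero vector is injective. -/
lemma toepT_inj {k N n : ℕ} (hkN : k + n ≤ N) (a : Fin (n + 1) → ℂ) (ha : a ≠ 0)
    (x : Fin k → ℂ) (hx : (toep k N n a)ᵀ *ᵥ x = 0) : x = 0 := by
  obtain ⟨s, hs, hsmin⟩ := exists_min_nonzero a ha
  have key : ∀ i : ℕ, ∀ hi : i < k, x ⟨i, hi⟩ = 0 := by
    intro i
    induction i using Nat.strong_induction_on with
    | _ i IH =>
      intro hi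
      have hjN : i + s.val < N := by have := s.isLt; omega
      have h0 := congrFun hx ⟨i + s.val, hjN⟩
      rw [mulVec, Pi.zero_apply] at h0
      have hsum : ∑ i' : Fin k, (toep k N n a) i' ⟨i + s.val, hjN⟩ * x i' = 0 := by
        simpa [dotProduct, transpose_apply] using h0
      rw [Finset.sum_eq_single (⟨i, hi⟩ : Fin k)] at hsum
      · have hent : (toep k N n a) ⟨i, hi⟩ ⟨i + s.val, hjN⟩ = a s := by
          have hc : (i : ℕ) ≤ i + s.val ∧ (i + s.val) - i ≤ n := ⟨by omega, by have := s.isLt; omega⟩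
          simp only [toep, Matrix.of_apply, dif_pos hc]
          congr 1
          exact Fin.ext (by simp)
        rw [hent] at hsum
        exact (mul_eq_zero.mp hsum).resolve_left hs
      · intro i' _ hi'
        rcases lt_or_gt_of_ne (fun hv : i'.val = i => hi' (Fin.ext hv)) with hlt | hgt
        · rw [IH i'.val hlt i'.isLt, mul_zero]
          -- careful: x i' = x ⟨i'.val, _⟩
        · have hent : (toep k N n a) i' ⟨i + s.val, hjN⟩ = 0 := by
            simp only [toep, Matrix.of_apply]
            split_ifs with hcond
            · exact hsmin _ (by show (i + s.val) - i'.val < s.val; omega)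
            · rfl
          rw [hent, zero_mul]
      · intro hmem; exact absurd (Finset.mem_univ _) hmem
  funext i
  have := key i.val i.isLt
  simpa using this

/-- Multiplication by a complex matrix with real entries commutes with `star`. -/
lemma mulVec_star_of_real {I J : Type*} [Fintype J] (M : Matrix I J ℂ)
    (hM : ∀ i j, star (M i j) = M i j) (v : J → ℂ) :
    M *ᵥ star v = star (M *ᵥ v) := by
  funext i
  simp only [mulVec, dotProduct, Pi.star_apply, star_sum, star_mul', hM]

lemma map_mul_ofReal {I J K : Type*} [Fintype J] (M : Matrix I J ℝ) (N : Matrix J K ℝ) :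
    (M * N).map Complex.ofReal = M.map Complex.ofReal * N.map Complex.ofReal := by
  ext i j
  simp only [Matrix.map_apply, Matrix.mul_apply]
  push_cast
  rfl

lemma toep_map {k N n : ℕ} (a : Fin (n + 1) → ℝ) :
    (toep k N n a).map (Complex.ofReal) = toep k N n (fun t => ((a t : ℝ) : ℂ)) := by
  ext i j
  simp only [toep, Matrix.map_apply, Matrix.of_apply]
  split_ifs <;> simp

theorem stmt2 (N m q : ℕ) (hq : 1 ≤ q) (hN : m + 2 * q < N)
    (y : Fin N → ℝ) (b : Fin (q + 1) → ℝ) (c : Fin (m + 1) → ℝ)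
    (hb : b ≠ 0) (hc : c ≠ 0)
    (z : Fin (N - (m + 2 * q) + 1) → ℂ) (hz : z ≠ 0)
    (hAz : (Matrix.of fun (i : Fin (N - (m + q))) =>
        (Fin.cons (((toep (N - (m + q)) N (m + q) (convVec m q c b) *ᵥ y) i : ℝ) : ℂ)
          (fun j : Fin (N - (m + 2 * q)) =>
            (((toep (N - (m + q)) N (m + q) (convVec m q c b) *
              (toep (N - (m + q)) N (m + q) (convVec m q c b))ᵀ *
              (toep (N - (m + 2 * q)) (N - (m + q)) q b)ᵀ) i j : ℝ) : ℂ)) :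
          Fin (N - (m + 2 * q) + 1) → ℂ)) *ᵥ z = 0) :
    z 0 ≠ 0 := by
  intro h0
  set a : Fin (m + q + 1) → ℝ := convVec m q c b with ha
  set A : Matrix (Fin (N - (m + q))) (Fin N) ℝ := toep (N - (m + q)) N (m + q) a with hA
  set B : Matrix (Fin (N - (m + 2 * q))) (Fin (N - (m + q))) ℝ :=
    toep (N - (m + 2 * q)) (N - (m + q)) q b with hB
  set z' : Fin (N - (m + 2 * q)) → ℂ := fun j => z j.succ with hz'
  set Aℂ : Matrix (Fin (N - (m + q))) (Fin N) ℂ := A.map Complex.ofReal with hAℂ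
  set Bℂ : Matrix (Fin (N - (m + 2 * q))) (Fin (N - (m + q))) ℂ := B.map Complex.ofReal with hBℂ
  have hMz : ((A * Aᵀ * Bᵀ).map Complex.ofReal) *ᵥ z' = 0 := by
    funext i
    have h := congrFun hAz i
    rw [mulVec, Pi.zero_apply] at h
    have h' : ((((A *ᵥ y) i : ℝ) : ℂ)) * z 0 +
        ∑ j : Fin (N - (m + 2 * q)), (((A * Aᵀ * Bᵀ) i j : ℝ) : ℂ) * z j.succ = 0 := by
      simpa [dotProduct, Fin.sum_univ_succ] using h
    rw [h0, mul_zero, zero_add] at h'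
    simpa [mulVec, dotProduct, Matrix.map_apply] using h'
  have hfac : (A * Aᵀ * Bᵀ).map Complex.ofReal = Aℂ * Aℂᵀ * Bℂᵀ := by
    rw [map_mul_ofReal, map_mul_ofReal, Matrix.transpose_map, Matrix.transpose_map, hAℂ, hBℂ]
  rw [hfac] at hMz
  set w : Fin (N - (m + q)) → ℂ := Bℂᵀ *ᵥ z' with hw
  set u : Fin N → ℂ := Aℂᵀ *ᵥ w with hu
  have hAu : Aℂ *ᵥ u = 0 := by
    rw [hu, hw, mulVec_mulVec, mulVec_mulVec]
    exact hMz
  have hreal : ∀ i j, star (Aℂᵀ i j) = Aℂᵀ i j := by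
    intro i j
    simp [hAℂ, Matrix.transpose_apply, Matrix.map_apply]
  have hstar : star u = Aℂᵀ *ᵥ star w := by
    rw [hu, ← mulVec_star_of_real _ hreal]
  have hdot : star u ⬝ᵥ u = 0 := by
    have h1 : star w ⬝ᵥ (Aℂ *ᵥ u) = star u ⬝ᵥ u := by
      rw [dotProduct_mulVec]
      congr 1
      rw [← mulVec_transpose]
      exact hstar.symm
    rw [hAu, dotProduct_zero] at h1
    exact h1.symm
  have hu0 : u = 0 := dotProduct_star_self_eq_zero.mp hdot
  have haℂ : (fun t => ((a t : ℝ) : ℂ)) ≠ 0 := by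
    intro hcon
    apply convVec_ne_zero hc hb
    funext t
    have ht := congrFun hcon t
    rw [Pi.zero_apply] at ht
    rw [Pi.zero_apply]
    exact_mod_cast ht
  have hw0 : w = 0 := by
    apply toepT_inj (k := N - (m + q)) (N := N) (n := m + q) (by omega)
      (fun t => ((a t : ℝ) : ℂ)) haℂ
    rw [← toep_map]
    rw [hu, hAℂ] at hu0
    exact hu0
  have hbℂ : (fun t => ((b t : ℝ) : ℂ)) ≠ 0 := by
    intro hcon
    apply hb
    funext t
    have ht := congrFun hcon t
    rw [Pi.zero_apply] at ht
    rw [Pi.zero_apply]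
    exact_mod_cast ht
  have hz'0 : z' = 0 := by
    apply toepT_inj (k := N - (m + 2 * q)) (N := N - (m + q)) (n := q) (by omega)
      (fun t => ((b t : ℝ) : ℂ)) hbℂ
    rw [← toep_map]
    rw [hw, hBℂ] at hw0
    exact hw0
  apply hz
  funext j
  refine Fin.cases ?_ (fun j => ?_) j
  · exact h0
  · exact congrFun hz'0 j
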